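/- Let Σ be a finite nonempty alphabet. For every nonempty Σ-labelled binary tree S, the asymptotic density of the set of trees containing S as a subtree equals 1; that is, lim_{n→∞} |{T ∈ ℬ^Σ_n : S ⪯ T}|/(C_n·|Σ|^n) = 1. -/

import Mathlib

open Filter Topology

namespace Sparse

inductive BTree (α : Type*) where
  | nil : BTree α
  | node : α → BTree α → BTree α → BTree α

namespace BTree

variable {α : Type*}

/-- The number of nodes of a binary tree. -/
def size : BTree α → ℕ
  | nil => 0
  | node _ l r => size l + size r + 1

/-- `Subtree S T` means `S = T`, or `T` is nonempty and `S` is a subtree of the left or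
right subtree of the root of `T`. -/
inductive Subtree : BTree α → BTree α → Prop where
  | refl (T : BTree α) : Subtree T T
  | left {S l r : BTree α} {a : α} : Subtree S l → Subtree S (node a l r)
  | right {S l r : BTree α} {a : α} : Subtree S r → Subtree S (node a l r)

end BTree

variable {α : Type*}

/-- A run of a tree automaton with transition relation `Δ` on a binary tree: the empty tree is
assigned `none` (i.e. `⊥`), and a nonempty tree with root label `a` and run values `ql`, `qr` on
the two subtrees is assigned a state `q` with `(ql, qr, a, q) ∈ Δ`. -/
inductive Run {Q : Type*} (Δ : Option Q → Option Q → α → Q → Prop) :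
    BTree α → Option Q → Prop where
  | nil : Run Δ BTree.nil none
  | node {a : α} {l r : BTree α} {ql qr : Option Q} {q : Q} :
      Run Δ l ql → Run Δ r qr → Δ ql qr a q → Run Δ (BTree.node a l r) (some q)

/-- A tree automaton with transitions `Δ` and accepting states `F` accepts `T` if some run
assigns `T` a state in `F`. -/
def TAccepts {Q : Type*} (Δ : Option Q → Option Q → α → Q → Prop) (F : Set Q)
    (T : BTree α) : Prop :=
  ∃ q ∈ F, Run Δ T (some q)

/-- A tree language is regular iff it is the set of trees accepted by some tree automaton
with finitely many states. -/
def RegularTreeLang (L : Set (BTree α)) : Prop :=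
  ∃ (Q : Type) (_ : Fintype Q) (Δ : Option Q → Option Q → α → Q → Prop) (F : Set Q),
    L = {T | TAccepts Δ F T}

/-- The relative number of `n`-node trees in `L`:
`|L ∩ ℬ^Σ_n| / (C_n ⬝ |Σ|^n)`, where `C_n` is the `n`-th Catalan number. -/
noncomputable def density [Fintype α] (L : Set (BTree α)) (n : ℕ) : ℝ :=
  (Nat.card {T : BTree α // T ∈ L ∧ T.size = n} : ℝ) /
    ((catalan n : ℝ) * (Fintype.card α : ℝ) ^ n)

/-- `L` has asymptotic density `c` if `density L n` tends to `c` as `n → ∞`. -/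
def HasDensity [Fintype α] (L : Set (BTree α)) (c : ℝ) : Prop :=
  Tendsto (density L) atTop (𝓝 c)

/-- The upper asymptotic density `P̄_lim(L) = limsup_n density L n`. -/
noncomputable def upperDensity [Fintype α] (L : Set (BTree α)) : ℝ :=
  limsup (density L) atTop

/-- `LT = {conc_a(S, T) : a ∈ Σ, S ∈ L}`. -/
def concL (L : Set (BTree α)) (T : BTree α) : Set (BTree α) :=
  {X | ∃ (a : α) (S : BTree α), S ∈ L ∧ X = BTree.node a S T}

/-- `LT⁻¹ = {S : ∃ a, conc_a(S, T) ∈ L}`. -/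
def quotR (L : Set (BTree α)) (T : BTree α) : Set (BTree α) :=
  {S | ∃ a : α, BTree.node a S T ∈ L}

/-- `T⁻¹L = {S : ∃ a, conc_a(T, S) ∈ L}`. -/
def quotL (T : BTree α) (L : Set (BTree α)) : Set (BTree α) :=
  {S | ∃ a : α, BTree.node a T S ∈ L}

/-- `L[T_k, …, T_1]⁻¹`, where the list is `[T_k, …, T_1]` (so the head is `T_k`):
`L[]⁻¹ = L` and `L[T_k,…,T_1]⁻¹ = (L[T_{k-1},…,T_1]⁻¹)T_k⁻¹ ∪ T_k⁻¹(L[T_{k-1},…,T_1]⁻¹)`. -/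
def quotIter (L : Set (BTree α)) : List (BTree α) → Set (BTree α)
  | [] => L
  | T :: Ts => quotR (quotIter L Ts) T ∪ quotL T (quotIter L Ts)

/-- A state `q` is reachable if some run of the automaton on some tree assigns `q` to the tree. -/
def TReachable {Q : Type*} (Δ : Option Q → Option Q → α → Q → Prop) (q : Q) : Prop :=
  ∃ T : BTree α, Run Δ T (some q)

/-- A set of states `V` is a sink if every transition involving a state of `V` as one of the
two child values leads into `V`. -/
def Sink {Q : Type*} (Δ : Option Q → Option Q → α → Q → Prop) (V : Set Q) : Prop :=
  ∀ q ∈ V, ∀ (q' : Option Q) (a : α) (q'' : Q),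
    (Δ (some q) q' a q'' ∨ Δ q' (some q) a q'') → q'' ∈ V


-- ===== auxiliary development =====

open Finset
open Finset.HasAntidiagonal.antidiagonal (fst_le snd_le)

namespace BTree

deriving instance DecidableEq for BTree

variable [DecidableEq α] [Fintype α]

/-- All trees with root label `a`, left child from `s`, right child from `t`. -/
abbrev pairNode (a : α) (s t : Finset (BTree α)) : Finset (BTree α) :=
  (s ×ˢ t).map ⟨fun x => node a x.1 x.2, fun ⟨x₁, x₂⟩ ⟨y₁, y₂⟩ h => by simpa using h⟩

/-- The finset of all `α`-labelled trees with `n` nodes. -/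
def treesOf : ℕ → Finset (BTree α)
  | 0 => {nil}
  | n + 1 =>
    Finset.univ.biUnion fun a : α =>
      (antidiagonal n).attach.biUnion fun ijh =>
        pairNode a (treesOf ijh.1.1) (treesOf ijh.1.2)
  decreasing_by
    · simp_wf; have := fst_le ijh.2; omega
    · simp_wf; have := snd_le ijh.2; omega

@[simp]
theorem treesOf_zero : (treesOf 0 : Finset (BTree α)) = {nil} := by rw [treesOf]

theorem treesOf_succ (n : ℕ) :
    (treesOf (n + 1) : Finset (BTree α)) =
      Finset.univ.biUnion fun a : α =>
        (antidiagonal n).biUnion fun ij =>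
          pairNode a (treesOf ij.1) (treesOf ij.2) := by
  rw [treesOf]
  ext
  simp

@[simp]
theorem mem_treesOf {x : BTree α} {n : ℕ} : x ∈ treesOf n ↔ x.size = n := by
  induction x generalizing n with
  | nil => cases n <;> simp [treesOf_succ, size]
  | node a l r ihl ihr => cases n with
    | zero => simp [size]
    | succ n =>
      simp only [treesOf_succ, mem_biUnion, mem_univ, true_and, Finset.HasAntidiagonal.mem_antidiagonal,
        Finset.mem_map, mem_product, Function.Embedding.coeFn_mk, Prod.exists, size]
      constructor
      · rintro ⟨b, i, j, hij, x, y, ⟨hx, hy⟩, hb, rfl, rfl⟩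
        rw [ihl] at hx; rw [ihr] at hy
        omega
      · intro h
        exact ⟨a, l.size, r.size, by omega, l, r, ⟨ihl.mpr rfl, ihr.mpr rfl⟩, rfl⟩

theorem card_treesOf (n : ℕ) :
    #(treesOf n : Finset (BTree α)) = catalan n * Fintype.card α ^ n := by
  induction' n using Nat.case_strong_induction_on with n ih
  · simp
  have hdisj2 : ∀ a : α, ∀ ij ∈ antidiagonal n, ∀ kl ∈ antidiagonal n, ij ≠ kl →
      Disjoint (pairNode a (treesOf ij.1) (treesOf ij.2))
        (pairNode a (treesOf kl.1) (treesOf kl.2)) := by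
    rintro a ⟨i, j⟩ hij ⟨k, l⟩ hkl hne
    simp_rw [disjoint_left]
    rintro x hx hy
    obtain ⟨⟨x1, x2⟩, hmem, rfl⟩ := Finset.mem_map.mp hx
    obtain ⟨⟨y1, y2⟩, hmem', heq⟩ := Finset.mem_map.mp hy
    change node a y1 y2 = node a x1 x2 at heq
    obtain ⟨-, rfl, rfl⟩ : a = a ∧ y1 = x1 ∧ y2 = x2 := by
      injection heq with h1 h2 h3; exact ⟨rfl, h2, h3⟩
    simp only [mem_product, mem_treesOf] at hmem hmem'
    apply hne
    have : i = k := by rw [← hmem.1, hmem'.1]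
    have : j = l := by rw [← hmem.2, hmem'.2]
    simp_all
  have hdisj1 : ∀ a ∈ (Finset.univ : Finset α), ∀ b ∈ Finset.univ, a ≠ b →
      Disjoint ((antidiagonal n).biUnion fun ij => pairNode a (treesOf ij.1) (treesOf ij.2))
        ((antidiagonal n).biUnion fun ij => pairNode b (treesOf ij.1) (treesOf ij.2)) := by
    intro a _ b _ hab
    simp_rw [disjoint_left, mem_biUnion]
    rintro x ⟨ij, hij, hx⟩ ⟨kl, hkl, hy⟩
    obtain ⟨⟨x1, x2⟩, -, rfl⟩ := Finset.mem_map.mp hx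
    obtain ⟨⟨y1, y2⟩, -, heq⟩ := Finset.mem_map.mp hy
    injection heq with h1 h2 h3
    exact hab h1.symm
  rw [treesOf_succ, card_biUnion hdisj1]
  have inner : ∀ a : α,
      #((antidiagonal n).biUnion fun ij => pairNode a (treesOf ij.1) (treesOf ij.2)) =
        ∑ ij ∈ antidiagonal n,
          (catalan ij.1 * Fintype.card α ^ ij.1) * (catalan ij.2 * Fintype.card α ^ ij.2) := by
    intro a
    rw [card_biUnion (hdisj2 a)]
    refine sum_congr rfl ?_
    rintro ⟨i, j⟩ H
    rw [card_map, card_product, ih _ (fst_le H), ih _ (snd_le H)]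
  simp_rw [inner, sum_const, card_univ, smul_eq_mul, catalan_succ']
  have : ∑ ij ∈ antidiagonal n,
      (catalan ij.1 * Fintype.card α ^ ij.1) * (catalan ij.2 * Fintype.card α ^ ij.2) =
      ∑ ij ∈ antidiagonal n, (catalan ij.1 * catalan ij.2) * Fintype.card α ^ n := by
    refine sum_congr rfl ?_
    rintro ⟨i, j⟩ H
    have : i + j = n := Finset.HasAntidiagonal.mem_antidiagonal.mp H
    rw [← this, pow_add]
    ring
  rw [this, ← sum_mul, pow_succ]
  ring

theorem size_le_of_subtree {S T : BTree α} (h : Subtree S T) : S.size ≤ T.size := by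
  induction h with
  | refl => exact le_rfl
  | left _ ih => simp only [size]; omega
  | right _ ih => simp only [size]; omega

theorem subtree_node_iff {S l r : BTree α} {a : α} :
    Subtree S (node a l r) ↔ S = node a l r ∨ Subtree S l ∨ Subtree S r := by
  constructor
  · intro h
    cases h with
    | refl => exact Or.inl rfl
    | left h => exact Or.inr (Or.inl h)
    | right h => exact Or.inr (Or.inr h)
  · rintro (rfl | h | h)
    · exact Subtree.refl _
    · exact Subtree.left h
    · exact Subtree.right h

theorem size_eq_zero {T : BTree α} : T.size = 0 ↔ T = nil := by
  cases T <;> simp [size]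

open scoped Classical in
/-- Trees of size `n` avoiding `S` as a subtree. -/
noncomputable def avoidOf (S : BTree α) (n : ℕ) : Finset (BTree α) :=
  (treesOf n).filter fun T => ¬ Subtree S T

theorem mem_avoidOf {S T : BTree α} {n : ℕ} :
    T ∈ avoidOf S n ↔ T.size = n ∧ ¬ Subtree S T := by
  classical
  rw [avoidOf]
  simp [mem_filter, mem_treesOf]

theorem card_avoidOf_zero {S : BTree α} (hS : S ≠ nil) : #(avoidOf S 0) = 1 := by
  have : avoidOf S 0 = {nil} := by
    ext T
    simp only [mem_avoidOf, size_eq_zero, mem_singleton]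
    constructor
    · exact fun h => h.1
    · rintro rfl
      refine ⟨rfl, fun h => hS ?_⟩
      cases h; rfl
  simp [this]

theorem card_avoidOf_le (S : BTree α) (n : ℕ) :
    #(avoidOf S n) ≤ catalan n * Fintype.card α ^ n := by
  classical
  rw [← card_treesOf, avoidOf]
  exact card_le_card (filter_subset _ _)

/-- The superset used for the recursion bound. -/
noncomputable def avoidSup (S : BTree α) (n : ℕ) : Finset (BTree α) :=
  Finset.univ.biUnion fun a : α =>
    (antidiagonal n).biUnion fun ij => pairNode a (avoidOf S ij.1) (avoidOf S ij.2)

theorem avoidOf_subset_avoidSup (S : BTree α) (n : ℕ) :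
    avoidOf S (n + 1) ⊆ avoidSup S n := by
  intro T hT
  rw [mem_avoidOf] at hT
  obtain ⟨hsize, havoid⟩ := hT
  match T, hsize with
  | node a l r, hsize =>
    rw [subtree_node_iff] at havoid
    push_neg at havoid
    simp only [size] at hsize
    simp only [avoidSup, mem_biUnion, mem_univ, true_and, Finset.HasAntidiagonal.mem_antidiagonal, Finset.mem_map,
      mem_product, Function.Embedding.coeFn_mk, Prod.exists]
    refine ⟨a, l.size, r.size, by omega, l, r, ?_⟩
    simp [mem_avoidOf, havoid.2.1, havoid.2.2]
    rfl

theorem card_avoidSup_le (S : BTree α) (n : ℕ) :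
    #(avoidSup S n) ≤
      Fintype.card α * ∑ ij ∈ antidiagonal n, #(avoidOf S ij.1) * #(avoidOf S ij.2) := by
  refine (card_biUnion_le).trans ?_
  rw [← card_univ, ← smul_eq_mul, ← sum_const]
  refine sum_le_sum fun a _ => ?_
  refine (card_biUnion_le).trans ?_
  refine sum_le_sum fun ij _ => ?_
  rw [card_map, card_product]

theorem card_avoidOf_succ_le (S : BTree α) (n : ℕ) :
    #(avoidOf S (n + 1)) ≤
      Fintype.card α * ∑ ij ∈ antidiagonal n, #(avoidOf S ij.1) * #(avoidOf S ij.2) :=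
  (card_le_card (avoidOf_subset_avoidSup S n)).trans (card_avoidSup_le S n)

theorem card_avoidOf_size_add_one_le {S : BTree α} {n : ℕ} (hsize : S.size = n + 1) :
    #(avoidOf S (n + 1)) + 1 ≤
      Fintype.card α * ∑ ij ∈ antidiagonal n, #(avoidOf S ij.1) * #(avoidOf S ij.2) := by
  have hmem : S ∈ avoidSup S n := by
    match S, hsize with
    | node a l r, hsize =>
      simp only [size] at hsize
      have hl : ¬ Subtree (node a l r) l := fun h => by
        have := size_le_of_subtree h; simp [size] at this
      have hr : ¬ Subtree (node a l r) r := fun h => by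
        have := size_le_of_subtree h; simp [size] at this
      simp only [avoidSup, mem_biUnion, mem_univ, true_and, Finset.HasAntidiagonal.mem_antidiagonal, Finset.mem_map,
        mem_product, Function.Embedding.coeFn_mk, Prod.exists]
      refine ⟨a, l.size, r.size, by omega, l, r, ?_⟩
      simp [mem_avoidOf, hl, hr]
      rfl
  have hnot : S ∉ avoidOf S (n + 1) := fun h => (mem_avoidOf.mp h).2 (Subtree.refl S)
  have : #(avoidOf S (n + 1)) < #(avoidSup S n) :=
    card_lt_card ⟨avoidOf_subset_avoidSup S n, fun hsub => hnot (hsub hmem)⟩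
  have := card_avoidSup_le S n
  omega


end BTree



theorem catalan_pos (n : ℕ) : 0 < catalan n := by
  have h1 : 0 < Nat.centralBinom n := Nat.centralBinom_pos n
  have h2 := Nat.succ_dvd_centralBinom n
  rw [catalan_eq_centralBinom_div]
  exact Nat.div_pos (Nat.le_of_dvd h1 h2) (Nat.succ_pos n)

theorem catalan_ratio (n : ℕ) : (n + 2) * catalan (n + 1) = 2 * (2 * n + 1) * catalan n := by
  have h1 := Nat.succ_mul_centralBinom_succ n
  have h2 := succ_mul_catalan_eq_centralBinom n
  have h3 := succ_mul_catalan_eq_centralBinom (n + 1)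
  have h3' : (n + 2) * catalan (n + 1) = Nat.centralBinom (n + 1) := h3
  have key : (n + 1) * ((n + 2) * catalan (n + 1)) = (n + 1) * (2 * (2 * n + 1) * catalan n) := by
    calc (n + 1) * ((n + 2) * catalan (n + 1)) = (n + 1) * Nat.centralBinom (n + 1) := by
          rw [h3']
      _ = 2 * (2 * n + 1) * Nat.centralBinom n := h1
      _ = 2 * (2 * n + 1) * ((n + 1) * catalan n) := by rw [h2]
      _ = (n + 1) * (2 * (2 * n + 1) * catalan n) := by ring
  exact Nat.eq_of_mul_eq_mul_left (by omega) key

theorem catalan_sum_identity (N : ℕ) :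
    ∑ n ∈ range N, (catalan n : ℝ) / 4 ^ n = 2 - 2 * (N + 1) * catalan N / 4 ^ N := by
  induction N with
  | zero => norm_num
  | succ N ih =>
    rw [sum_range_succ, ih]
    have hr : ((N : ℝ) + 2) * catalan (N + 1) = 2 * (2 * N + 1) * catalan N := by
      exact_mod_cast catalan_ratio N
    have h4 : (4 : ℝ) ^ N ≠ 0 := by positivity
    push_cast
    field_simp
    linear_combination (2 * (4 : ℝ) ^ N) * hr

theorem conv_sum_le {x : ℕ → ℝ} (hx : ∀ n, 0 ≤ x n) (N : ℕ) :
    ∑ n ∈ range N, ∑ ij ∈ antidiagonal n, x ij.1 * x ij.2 ≤ (∑ i ∈ range N, x i) ^ 2 := by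
  have hdisj : Set.PairwiseDisjoint ↑(range N) (fun n => (antidiagonal n : Finset (ℕ × ℕ))) := by
    intro a _ b _ hab
    simp_rw [Function.onFun, disjoint_left]
    rintro ⟨i, j⟩ hij hij'
    rw [Finset.HasAntidiagonal.mem_antidiagonal] at hij hij'
    omega
  rw [← sum_biUnion hdisj, sq, sum_mul_sum, ← sum_product']
  refine sum_le_sum_of_subset_of_nonneg ?_ fun p _ _ => mul_nonneg (hx _) (hx _)
  intro p hp
  rw [mem_biUnion] at hp
  obtain ⟨n, hn, hpn⟩ := hp
  rw [mem_range] at hn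
  rw [Finset.HasAntidiagonal.mem_antidiagonal] at hpn
  rw [mem_product, mem_range, mem_range]
  omega

theorem one_add_pow_le {δ : ℝ} (h0 : 0 ≤ δ) (h1 : δ ≤ 1) (j : ℕ) :
    (1 + δ) ^ j ≤ 1 + ((2 : ℝ) ^ j - 1) * δ := by
  induction j with
  | zero => norm_num
  | succ j ih =>
    have h2 : (1 : ℝ) ≤ 2 ^ j := one_le_pow₀ (by norm_num)
    calc (1 + δ) ^ (j + 1) = (1 + δ) ^ j * (1 + δ) := by ring
      _ ≤ (1 + ((2 : ℝ) ^ j - 1) * δ) * (1 + δ) := by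
          apply mul_le_mul_of_nonneg_right ih (by linarith)
      _ ≤ 1 + ((2 : ℝ) ^ (j + 1) - 1) * δ := by
          have key : (0:ℝ) ≤ ((2:ℝ) ^ j - 1) * δ * (1 - δ) :=
            mul_nonneg (mul_nonneg (by linarith) h0) (by linarith)
          ring_nf
          ring_nf at key
          nlinarith [key]


section Main

variable {α : Type*} [DecidableEq α] [Fintype α] [Nonempty α]

open BTree

theorem partial_sum_le_two (S : BTree α) (hS : S ≠ BTree.nil) (N : ℕ) :
    ∑ n ∈ range N, (#(avoidOf S n) : ℝ) *
      ((1 + (8 * (Fintype.card α : ℝ))⁻¹ ^ S.size) / (4 * (Fintype.card α : ℝ))) ^ n ≤ 2 := by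
  induction N using Nat.strong_induction_on with
  | _ N IH =>
  set m : ℝ := (Fintype.card α : ℝ) with hm_def
  have hm1 : (1 : ℝ) ≤ m := by
    rw [hm_def]; exact_mod_cast Fintype.card_pos
  have hm0 : (0 : ℝ) < m := lt_of_lt_of_le one_pos hm1
  set k : ℕ := S.size with hk_def
  have hk1 : 1 ≤ k := by
    rcases Nat.eq_zero_or_pos k with h | h
    · exact absurd (size_eq_zero.mp h) hS
    · exact h
  set δ : ℝ := (8 * m)⁻¹ ^ k with hδ_def
  have hδ0 : 0 < δ := by positivity
  have hδ8 : δ ≤ (4 : ℝ)⁻¹ ^ k / 2 ^ k := by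
    rw [hδ_def]
    have : (8 * m)⁻¹ ≤ (8 : ℝ)⁻¹ := by
      rw [inv_le_inv₀ (by positivity) (by norm_num)]; nlinarith
    calc (8 * m)⁻¹ ^ k ≤ (8 : ℝ)⁻¹ ^ k := pow_le_pow_left₀ (by positivity) this k
      _ = (4 : ℝ)⁻¹ ^ k / 2 ^ k := by
          rw [eq_div_iff (by positivity : ((2:ℝ) ^ k) ≠ 0), ← mul_pow]; norm_num
  have hδ1 : δ ≤ 1 := by
    refine hδ8.trans ?_
    have h4 : (4 : ℝ)⁻¹ ^ k ≤ 1 := pow_le_one₀ (by norm_num) (by norm_num)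
    have h2 : (1 : ℝ) ≤ 2 ^ k := one_le_pow₀ (by norm_num)
    calc (4 : ℝ)⁻¹ ^ k / 2 ^ k ≤ 1 / 1 := by
          apply div_le_div₀ (by norm_num) h4 one_pos h2
      _ = 1 := by norm_num
  set r : ℝ := (1 + δ) / (4 * m) with hr_def
  have hr0 : 0 < r := by rw [hr_def]; positivity
  have hmr : m * r = (1 + δ) / 4 := by rw [hr_def]; field_simp
  have hrlow : (4 * m)⁻¹ ≤ r := by
    rw [hr_def, inv_eq_one_div]
    apply div_le_div_of_nonneg_right ?_ (by positivity)
    · linarith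
  have hrk : δ ≤ r ^ k := by
    calc δ = ((8 * m)⁻¹) ^ k := hδ_def
      _ ≤ ((4 * m)⁻¹) ^ k := by
          apply pow_le_pow_left₀ (by positivity)
          rw [inv_le_inv₀ (by positivity) (by positivity)]; nlinarith
      _ ≤ r ^ k := pow_le_pow_left₀ (by positivity) hrlow k
  have hxnonneg : ∀ n, (0 : ℝ) ≤ (#(avoidOf S n) : ℝ) * r ^ n := fun n => by positivity
  rcases le_or_gt N k with hNk | hNk
  -- base case: N ≤ k
  · have step1 : ∑ n ∈ range N, (#(avoidOf S n) : ℝ) * r ^ n ≤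
        ∑ n ∈ range k, (#(avoidOf S n) : ℝ) * r ^ n :=
      sum_le_sum_of_subset_of_nonneg (range_subset_range.mpr hNk) fun n _ _ => hxnonneg n
    have step2 : ∑ n ∈ range k, (#(avoidOf S n) : ℝ) * r ^ n ≤
        ∑ n ∈ range k, ((catalan n : ℝ) / 4 ^ n) * (1 + δ) ^ k := by
      refine sum_le_sum fun n hn => ?_
      have hcard : (#(avoidOf S n) : ℝ) ≤ (catalan n : ℝ) * m ^ n := by
        rw [hm_def]; exact_mod_cast card_avoidOf_le S n
      calc (#(avoidOf S n) : ℝ) * r ^ n ≤ ((catalan n : ℝ) * m ^ n) * r ^ n :=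
            mul_le_mul_of_nonneg_right hcard (by positivity)
        _ = (catalan n : ℝ) / 4 ^ n * (1 + δ) ^ n := by
            rw [mul_assoc, ← mul_pow, hmr, div_pow, div_eq_mul_inv, div_eq_mul_inv]
            ring
        _ ≤ (catalan n : ℝ) / 4 ^ n * (1 + δ) ^ k := by
            apply mul_le_mul_of_nonneg_left ?_ (by positivity)
            exact pow_le_pow_right₀ (by linarith) (mem_range.mp hn).le
    have hsum : ∑ n ∈ range k, ((catalan n : ℝ) / 4 ^ n) * (1 + δ) ^ k =
        (2 - 2 * (k + 1) * catalan k / 4 ^ k) * (1 + δ) ^ k := by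
      rw [← sum_mul, catalan_sum_identity]
    set ε : ℝ := 2 * (k + 1) * catalan k / 4 ^ k with hε_def
    have hεnn : 0 ≤ 2 - ε := by
      rw [hε_def, ← catalan_sum_identity k]
      positivity
    have hε4 : 4 * (4 : ℝ)⁻¹ ^ k ≤ ε := by
      rw [hε_def]
      have hck : (1 : ℝ) ≤ (catalan k : ℝ) := by exact_mod_cast catalan_pos k
      have hkk : (4 : ℝ) ≤ 2 * (k + 1) := by
        have : (1 : ℝ) ≤ (k : ℝ) := by exact_mod_cast hk1
        linarith
      rw [div_eq_mul_inv, ← inv_pow]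
      calc 4 * (4 : ℝ)⁻¹ ^ k = 4 * 1 * (4 : ℝ)⁻¹ ^ k := by ring
        _ ≤ 2 * ((k : ℝ) + 1) * (catalan k : ℝ) * (4 : ℝ)⁻¹ ^ k := by
            apply mul_le_mul_of_nonneg_right ?_ (by positivity)
            calc (4 : ℝ) * 1 = 4 := by ring
              _ ≤ 2 * ((k : ℝ) + 1) := hkk
              _ = 2 * ((k : ℝ) + 1) * 1 := by ring
              _ ≤ 2 * ((k : ℝ) + 1) * (catalan k : ℝ) := by
                  apply mul_le_mul_of_nonneg_left hck (by positivity)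
    have hpow : (1 + δ) ^ k ≤ 1 + ((2 : ℝ) ^ k - 1) * δ := one_add_pow_le hδ0.le hδ1 k
    have hu : 2 * (((2 : ℝ) ^ k - 1) * δ) ≤ ε := by
      have h2kpos : (0 : ℝ) < 2 ^ k := by positivity
      have hδ8' : δ * 2 ^ k ≤ (4 : ℝ)⁻¹ ^ k := (le_div_iff₀ h2kpos).mp hδ8
      nlinarith [hε4, hδ0.le, hδ8']
    have hfinal : (2 - ε) * (1 + δ) ^ k ≤ 2 := by
      have hun : 0 ≤ ((2 : ℝ) ^ k - 1) * δ := by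
        have h2k1 : (1 : ℝ) ≤ 2 ^ k := one_le_pow₀ (by norm_num)
        exact mul_nonneg (by linarith) hδ0.le
      calc (2 - ε) * (1 + δ) ^ k ≤ (2 - ε) * (1 + ((2 : ℝ) ^ k - 1) * δ) :=
            mul_le_mul_of_nonneg_left hpow hεnn
        _ ≤ 2 := by nlinarith
    calc ∑ n ∈ range N, (#(avoidOf S n) : ℝ) * r ^ n ≤
          ∑ n ∈ range k, ((catalan n : ℝ) / 4 ^ n) * (1 + δ) ^ k := step1.trans step2
      _ = (2 - ε) * (1 + δ) ^ k := by rw [hsum]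
      _ ≤ 2 := hfinal
  -- inductive case: N = M + 1 with k ≤ M
  · obtain ⟨M, rfl⟩ : ∃ M, N = M + 1 := ⟨N - 1, by omega⟩
    have hMk : k ≤ M := by omega
    rw [sum_range_succ']
    have hx0 : (#(avoidOf S 0) : ℝ) * r ^ 0 = 1 := by
      rw [card_avoidOf_zero hS]; norm_num
    rw [hx0]
    have key : ∀ n ∈ range M, (#(avoidOf S (n + 1)) : ℝ) * r ^ (n + 1) ≤
        m * r * (∑ ij ∈ antidiagonal n,
          ((#(avoidOf S ij.1) : ℝ) * r ^ ij.1) * ((#(avoidOf S ij.2) : ℝ) * r ^ ij.2)) -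
        (if n = k - 1 then r ^ k else 0) := by
      intro n _
      have hconv : (∑ ij ∈ antidiagonal n, (#(avoidOf S ij.1) : ℝ) * (#(avoidOf S ij.2) : ℝ))
          * r ^ (n + 1) = r * ∑ ij ∈ antidiagonal n,
          ((#(avoidOf S ij.1) : ℝ) * r ^ ij.1) * ((#(avoidOf S ij.2) : ℝ) * r ^ ij.2) := by
        rw [sum_mul, mul_sum]
        refine sum_congr rfl fun ij hij => ?_
        have hij' : ij.1 + ij.2 = n := Finset.HasAntidiagonal.mem_antidiagonal.mp hij
        rw [show n + 1 = ij.1 + ij.2 + 1 by omega, pow_succ, pow_add]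
        ring
      by_cases hcase : n = k - 1
      · have hnk : n + 1 = k := by omega
        have hbound := card_avoidOf_size_add_one_le (S := S) (n := n) (by omega)
        have hboundR : (#(avoidOf S (n + 1)) : ℝ) + 1 ≤
            m * ∑ ij ∈ antidiagonal n, (#(avoidOf S ij.1) : ℝ) * (#(avoidOf S ij.2) : ℝ) := by
          rw [hm_def]
          exact_mod_cast hbound
        have hrn : (0 : ℝ) < r ^ (n + 1) := by positivity
        rw [if_pos hcase, ← hnk]
        have h1 := mul_le_mul_of_nonneg_right hboundR hrn.le
        rw [add_mul, one_mul, mul_assoc, hconv] at h1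
        linarith [h1]
      · have hbound := card_avoidOf_succ_le S n
        have hboundR : (#(avoidOf S (n + 1)) : ℝ) ≤
            m * ∑ ij ∈ antidiagonal n, (#(avoidOf S ij.1) : ℝ) * (#(avoidOf S ij.2) : ℝ) := by
          rw [hm_def]
          exact_mod_cast hbound
        have hrn : (0 : ℝ) < r ^ (n + 1) := by positivity
        rw [if_neg hcase]
        have h1 := mul_le_mul_of_nonneg_right hboundR hrn.le
        rw [mul_assoc, hconv] at h1
        linarith [h1]
    have sum_key : ∑ n ∈ range M, (#(avoidOf S (n + 1)) : ℝ) * r ^ (n + 1) ≤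
        m * r * (∑ n ∈ range M, ∑ ij ∈ antidiagonal n,
          ((#(avoidOf S ij.1) : ℝ) * r ^ ij.1) * ((#(avoidOf S ij.2) : ℝ) * r ^ ij.2)) - r ^ k := by
      calc ∑ n ∈ range M, (#(avoidOf S (n + 1)) : ℝ) * r ^ (n + 1) ≤
            ∑ n ∈ range M, (m * r * (∑ ij ∈ antidiagonal n,
              ((#(avoidOf S ij.1) : ℝ) * r ^ ij.1) * ((#(avoidOf S ij.2) : ℝ) * r ^ ij.2)) -
              (if n = k - 1 then r ^ k else 0)) := sum_le_sum key
        _ = m * r * (∑ n ∈ range M, ∑ ij ∈ antidiagonal n,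
              ((#(avoidOf S ij.1) : ℝ) * r ^ ij.1) * ((#(avoidOf S ij.2) : ℝ) * r ^ ij.2)) -
            ∑ n ∈ range M, (if n = k - 1 then r ^ k else 0) := by
            rw [sum_sub_distrib, mul_sum]
        _ = _ := by
            rw [Finset.sum_ite_eq' (range M) (k - 1) (fun _ => r ^ k)]
            simp [mem_range, show k - 1 < M by omega]
    have hconvle : ∑ n ∈ range M, ∑ ij ∈ antidiagonal n,
        ((#(avoidOf S ij.1) : ℝ) * r ^ ij.1) * ((#(avoidOf S ij.2) : ℝ) * r ^ ij.2) ≤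
        (∑ i ∈ range M, (#(avoidOf S i) : ℝ) * r ^ i) ^ 2 :=
      conv_sum_le hxnonneg M
    have hPM : ∑ i ∈ range M, (#(avoidOf S i) : ℝ) * r ^ i ≤ 2 := IH M (by omega)
    have hPM0 : 0 ≤ ∑ i ∈ range M, (#(avoidOf S i) : ℝ) * r ^ i :=
      sum_nonneg fun i _ => hxnonneg i
    have hsq : (∑ i ∈ range M, (#(avoidOf S i) : ℝ) * r ^ i) ^ 2 ≤ 4 := by nlinarith
    have hmr' : 0 ≤ m * r := by positivity
    calc (∑ n ∈ range M, (#(avoidOf S (n + 1)) : ℝ) * r ^ (n + 1)) + 1 ≤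
          (m * r * (∑ i ∈ range M, (#(avoidOf S i) : ℝ) * r ^ i) ^ 2 - r ^ k) + 1 := by
          have hstep := mul_le_mul_of_nonneg_left hconvle hmr'
          linarith [sum_key, hstep]
      _ ≤ (m * r * 4 - r ^ k) + 1 := by
          have hstep2 := mul_le_mul_of_nonneg_left hsq hmr'
          linarith [hstep2]
      _ = (1 + δ) - r ^ k + 1 := by rw [hmr]; ring
      _ ≤ 2 := by linarith [hrk]

end Main

section Final

variable {α : Type*} [DecidableEq α] [Fintype α] [Nonempty α]

open BTree Filter Topology

theorem card_avoidOf_mul_pow_le (S : BTree α) (hS : S ≠ BTree.nil) (n : ℕ) :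
    (#(avoidOf S n) : ℝ) *
      ((1 + (8 * (Fintype.card α : ℝ))⁻¹ ^ S.size) / (4 * (Fintype.card α : ℝ))) ^ n ≤ 2 := by
  have h := partial_sum_le_two S hS (n + 1)
  refine le_trans ?_ h
  refine Finset.single_le_sum (f := fun i => (#(avoidOf S i) : ℝ) *
    ((1 + (8 * (Fintype.card α : ℝ))⁻¹ ^ S.size) / (4 * (Fintype.card α : ℝ))) ^ i)
    (fun i _ => by positivity) (self_mem_range_succ n)

theorem avoid_ratio_le (S : BTree α) (hS : S ≠ BTree.nil) (n : ℕ) (hn : 1 ≤ n) :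
    (#(avoidOf S n) : ℝ) / ((catalan n : ℝ) * (Fintype.card α : ℝ) ^ n) ≤
      4 * n * (n + 1) * ((1 + (8 * (Fintype.card α : ℝ))⁻¹ ^ S.size)⁻¹) ^ n := by
  set m : ℝ := (Fintype.card α : ℝ) with hm_def
  have hm1 : (1 : ℝ) ≤ m := by rw [hm_def]; exact_mod_cast Fintype.card_pos
  have hm0 : (0 : ℝ) < m := lt_of_lt_of_le one_pos hm1
  set δ : ℝ := (8 * m)⁻¹ ^ S.size with hδ_def
  have hδ0 : 0 < δ := by positivity
  set r : ℝ := (1 + δ) / (4 * m) with hr_def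
  have hr0 : 0 < r := by rw [hr_def]; positivity
  set D : ℝ := (catalan n : ℝ) * m ^ n with hD_def
  have hD0 : 0 < D := by
    rw [hD_def]
    have := catalan_pos n
    positivity
  set A : ℝ := (#(avoidOf S n) : ℝ) with hA_def
  have hA0 : 0 ≤ A := by rw [hA_def]; positivity
  have hAr : A * r ^ n ≤ 2 := card_avoidOf_mul_pow_le S hS n
  -- Catalan lower bound: (4 m)^n ≤ 2 n (n+1) D
  have hcat : ((4 : ℝ) * m) ^ n ≤ 2 * n * (n + 1) * D := by
    have h1 : 4 ^ n ≤ 2 * n * Nat.centralBinom n :=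
      Nat.four_pow_le_two_mul_self_mul_centralBinom n hn
    have h2 : (n + 1) * catalan n = Nat.centralBinom n := succ_mul_catalan_eq_centralBinom n
    have h3 : (4 : ℕ) ^ n ≤ 2 * n * ((n + 1) * catalan n) := by rw [h2]; exact h1
    have h3R : ((4 : ℝ)) ^ n ≤ 2 * n * ((n + 1) * (catalan n : ℝ)) := by exact_mod_cast h3
    have hmn : (0 : ℝ) < m ^ n := by positivity
    calc ((4 : ℝ) * m) ^ n = 4 ^ n * m ^ n := by rw [mul_pow]
      _ ≤ (2 * n * ((n + 1) * (catalan n : ℝ))) * m ^ n :=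
          mul_le_mul_of_nonneg_right h3R hmn.le
      _ = 2 * n * (n + 1) * D := by rw [hD_def]; ring
  set X : ℝ := ((1 + δ)⁻¹) ^ n with hX_def
  have hX0 : 0 < X := by rw [hX_def]; positivity
  have hrinv : r⁻¹ ^ n = (4 * m) ^ n * X := by
    rw [hr_def, hX_def, ← mul_pow, inv_div, div_eq_mul_inv]
  have hA2 : A ≤ 2 * ((4 * m) ^ n * X) := by
    have hrn : (0 : ℝ) < r ^ n := by positivity
    rw [← hrinv]
    have := mul_le_mul_of_nonneg_right hAr (le_of_lt (by positivity : (0:ℝ) < r⁻¹ ^ n))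
    calc A = A * r ^ n * r⁻¹ ^ n := by
          rw [mul_assoc, ← mul_pow, mul_inv_cancel₀ hr0.ne', one_pow, mul_one]
      _ ≤ 2 * r⁻¹ ^ n := this
  rw [div_le_iff₀ hD0]
  have hfin : 2 * ((4 * m) ^ n * X) ≤ 4 * n * (n + 1) * X * D := by
    have := mul_le_mul_of_nonneg_left hcat (by positivity : (0 : ℝ) ≤ 2 * X)
    calc 2 * ((4 * m) ^ n * X) = 2 * X * (4 * m) ^ n := by ring
      _ ≤ 2 * X * (2 * n * (n + 1) * D) := this
      _ = 4 * n * (n + 1) * X * D := by ring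
  calc A ≤ 2 * ((4 * m) ^ n * X) := hA2
    _ ≤ 4 * n * (n + 1) * X * D := hfin

end Final


open BTree in
/-- For every nonempty tree `S`, the set of trees containing `S` as a subtree
has asymptotic density 1. -/
theorem infinite_monkey_trees {α : Type*} [Fintype α] [Nonempty α]
    (S : BTree α) (hS : S ≠ BTree.nil) :
    HasDensity {T : BTree α | BTree.Subtree S T} 1 := by
  classical
  set m : ℝ := (Fintype.card α : ℝ) with hm_def
  have hm1 : (1 : ℝ) ≤ m := by rw [hm_def]; exact_mod_cast Fintype.card_pos
  have hm0 : (0 : ℝ) < m := lt_of_lt_of_le one_pos hm1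
  set δ : ℝ := (8 * m)⁻¹ ^ S.size with hδ_def
  have hδ0 : 0 < δ := by positivity
  have hdensity : ∀ n, density {T : BTree α | BTree.Subtree S T} n
      = 1 - (#(avoidOf S n) : ℝ) / ((catalan n : ℝ) * m ^ n) := by
    intro n
    have hc0 : (0 : ℝ) < (catalan n : ℝ) := by exact_mod_cast catalan_pos n
    have hD0 : (0 : ℝ) < (catalan n : ℝ) * m ^ n := by positivity
    have hcount : Nat.card {T : BTree α // T ∈ {T : BTree α | BTree.Subtree S T} ∧ T.size = n}
        = #((treesOf n).filter fun T => Subtree S T) := by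
      rw [Nat.card_congr (Equiv.subtypeEquivRight (q := fun T =>
        T ∈ (treesOf n).filter fun T => Subtree S T) (fun T => by
          simp [Finset.mem_filter, mem_treesOf, Set.mem_setOf_eq, and_comm]))]
      rw [Nat.card_eq_fintype_card]
      exact Fintype.card_coe _
    have havd : avoidOf S n = (treesOf n).filter (fun T => ¬ Subtree S T) := by
      ext T
      simp [mem_avoidOf, Finset.mem_filter, mem_treesOf]
    have hsplit : #((treesOf n).filter fun T => Subtree S T) + #(avoidOf S n)
        = catalan n * Fintype.card α ^ n := by
      rw [havd, Finset.card_filter_add_card_filter_not, card_treesOf]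
    have hsplitR : (#((treesOf n).filter fun T => Subtree S T) : ℝ)
        = (catalan n : ℝ) * m ^ n - (#(avoidOf S n) : ℝ) := by
      rw [hm_def]
      have : ((#((treesOf n).filter fun T => Subtree S T) + #(avoidOf S n) : ℕ) : ℝ)
          = ((catalan n * Fintype.card α ^ n : ℕ) : ℝ) := by rw [hsplit]
      push_cast at this
      linarith
    rw [density, hcount, hsplitR, sub_div, div_self hD0.ne']
  have hq : Tendsto (fun n => (#(avoidOf S n) : ℝ) / ((catalan n : ℝ) * m ^ n)) atTop (𝓝 0) := by
    have hρpos : (0 : ℝ) < (1 + δ)⁻¹ := by positivity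
    have hρ : ‖(1 + δ)⁻¹‖ < 1 := by
      rw [Real.norm_eq_abs, abs_of_pos hρpos]
      rw [inv_lt_one_iff₀]
      right
      linarith
    have h2 := summable_pow_mul_geometric_of_norm_lt_one 2 hρ
    have h1 := summable_pow_mul_geometric_of_norm_lt_one 1 hρ
    have hsum : Summable (fun n : ℕ => 4 * (n : ℝ) * ((n : ℝ) + 1) * ((1 + δ)⁻¹) ^ n) := by
      refine ((h2.add h1).mul_left 4).congr fun n => ?_
      push_cast
      ring
    refine squeeze_zero' (Eventually.of_forall fun n => by positivity) ?_
      hsum.tendsto_atTop_zero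
    filter_upwards [eventually_ge_atTop 1] with n hn
    exact avoid_ratio_le S hS n hn
  have h1 : Tendsto (fun n => 1 - (#(avoidOf S n) : ℝ) / ((catalan n : ℝ) * m ^ n))
      atTop (𝓝 (1 - 0)) := tendsto_const_nhds.sub hq
  rw [sub_zero] at h1
  exact h1.congr fun n => (hdensity n).symm

end Sparse
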